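/- Let κ > 0. For n ∈ ℕ, let y_n := 2^{−2/3}·(2n+1)^{4/3}·( ((1 + κ_n)^{1/2} + 1)^{1/3} − ((1 + κ_n)^{1/2} − 1)^{1/3} ) with κ_n := (16/27)·κ³·(2n+1)^{−2}, let y_{n,+} := (4·(2n+1)²·(2y_n)^{−3/2} + 1)^{1/2}, and let λ_n^i := −(1/2)·(2y_n)^{1/2}·(1 − i·y_{n,+}) (the non-real root of λ⁴ − 2(2n+1)²λ − (2n+1)²κ = 0 in the upper half-plane). Then lim_{n→∞} ( |λ_n^i| − 2^{1/3}·(2n+1)^{2/3} ) = −κ/12, and the argument of λ_n^i (taken in (0, π)) converges to 2π/3 as n → ∞. -/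

import Mathlib

open Filter Real Topology

noncomputable def sF (c t : ℝ) : ℝ := (1 + c * t ^ 3) ^ ((1:ℝ)/2)
noncomputable def fF (c t : ℝ) : ℝ := (2:ℝ) ^ (-(2:ℝ)/3) *
  ((sF c t + 1) ^ ((1:ℝ)/3) - t * (c / (sF c t + 1)) ^ ((1:ℝ)/3))
noncomputable def hF (c t : ℝ) : ℝ := fF c t + (2 * fF c t) ^ (-(1:ℝ)/2)
noncomputable def gF (c t : ℝ) : ℝ := Real.sqrt (hF c t)
noncomputable def pF (c t : ℝ) : ℝ := Real.sqrt (4 * (2 * fF c t) ^ (-(3:ℝ)/2) + 1)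

lemma sF_zero (c : ℝ) : sF c 0 = 1 := by simp [sF]

lemma fF_zero (c : ℝ) : fF c 0 = (2:ℝ) ^ (-(1:ℝ)/3) := by
  rw [fF, sF_zero]
  norm_num
  rw [← Real.rpow_add two_pos]
  norm_num

lemma hasDerivAt_sF (c : ℝ) : HasDerivAt (sF c) 0 0 := by
  have h1 : HasDerivAt (fun t : ℝ => 1 + c * t ^ 3) 0 0 := by
    have := ((hasDerivAt_pow 3 (0:ℝ)).const_mul c).const_add 1
    exact this.congr_deriv (by norm_num)
  have h2 := h1.rpow_const (p := (1:ℝ)/2) (by norm_num)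
  exact h2.congr_deriv (by norm_num)

lemma hasDerivAt_fF {c : ℝ} (hc : 0 < c) :
    HasDerivAt (fF c) (-((2:ℝ)^(-(2:ℝ)/3) * (c/2)^((1:ℝ)/3))) 0 := by
  have hs := hasDerivAt_sF c
  have hs1 : HasDerivAt (fun t => sF c t + 1) 0 0 := hs.add_const 1
  have hs1v : sF c 0 + 1 = 2 := by rw [sF_zero]; norm_num
  have hA : HasDerivAt (fun t => (sF c t + 1) ^ ((1:ℝ)/3)) 0 0 := by
    have := hs1.rpow_const (p := (1:ℝ)/3) (by rw [hs1v]; norm_num)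
    convert this using 1
    norm_num
  have hq : HasDerivAt (fun t => c / (sF c t + 1)) 0 0 := by
    have := (hasDerivAt_const (0:ℝ) c).div hs1 (by rw [hs1v]; norm_num)
    exact this.congr_deriv (by norm_num)
  have hB0 : HasDerivAt (fun t => (c / (sF c t + 1)) ^ ((1:ℝ)/3)) 0 0 := by
    have := hq.rpow_const (p := (1:ℝ)/3) (Or.inl (by rw [hs1v]; positivity))
    convert this using 1
    norm_num
  have hB : HasDerivAt (fun t => t * (c / (sF c t + 1)) ^ ((1:ℝ)/3))
      ((c/2)^((1:ℝ)/3)) 0 := by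
    have := (hasDerivAt_id (0:ℝ)).mul hB0
    exact this.congr_deriv (by simp [hs1v])
  have := ((hA.sub hB).const_mul ((2:ℝ)^(-(2:ℝ)/3)))
  exact this.congr_deriv (by ring)

lemma fF_zero_pos (c : ℝ) : 0 < fF c 0 := by
  rw [fF_zero]; positivity

lemma two_fF_zero (c : ℝ) : 2 * fF c 0 = (2:ℝ) ^ ((2:ℝ)/3) := by
  rw [fF_zero]
  nth_rewrite 1 [show (2:ℝ) = (2:ℝ)^(1:ℝ) by norm_num]
  rw [← Real.rpow_add two_pos]
  norm_num

lemma hF_zero (c : ℝ) : hF c 0 = (2:ℝ) ^ ((2:ℝ)/3) := by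
  rw [hF, two_fF_zero, fF_zero, ← Real.rpow_mul (by norm_num : (0:ℝ) ≤ 2)]
  rw [show (2:ℝ)/3 * (-(1)/2) = -(1:ℝ)/3 by norm_num]
  rw [show (2:ℝ)/3 = 1 + -(1:ℝ)/3 by norm_num, Real.rpow_add two_pos, Real.rpow_one]
  ring

lemma gF_zero (c : ℝ) : gF c 0 = (2:ℝ) ^ ((1:ℝ)/3) := by
  rw [gF, hF_zero, Real.sqrt_eq_rpow, ← Real.rpow_mul (by norm_num : (0:ℝ) ≤ 2)]
  norm_num

lemma hasDerivAt_gF {κ : ℝ} (hκ : 0 < κ) :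
    HasDerivAt (gF (16/27*κ^3)) (-κ/12) 0 := by
  set c : ℝ := 16/27*κ^3 with hcdef
  have hc : 0 < c := by positivity
  have hf := hasDerivAt_fF hc
  set d : ℝ := -((2:ℝ)^(-(2:ℝ)/3) * (c/2)^((1:ℝ)/3)) with hddef
  have hcd : (c/2) = (2*κ/3)^(3:ℕ) := by rw [hcdef]; ring
  have hd : d = -((2:ℝ)^(-(2:ℝ)/3) * (2*κ/3)) := by
    rw [hddef, hcd, ← Real.rpow_natCast (2*κ/3) 3,
      ← Real.rpow_mul (by positivity : (0:ℝ) ≤ 2*κ/3)]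
    norm_num
  have e1 : (2:ℝ)^((1:ℝ)/3) = 2^(-(2:ℝ)/3) * 2 := by
    rw [show (1:ℝ)/3 = -(2:ℝ)/3 + 1 by norm_num, Real.rpow_add two_pos, Real.rpow_one]
  have hd2 : d = -((2:ℝ)^((1:ℝ)/3) * κ/3) := by
    rw [hd]; linear_combination (κ/3) * e1
  have hfne : fF c 0 ≠ 0 := (fF_zero_pos c).ne'
  have h2fne : 2 * fF c 0 ≠ 0 := by positivity
  have hh : HasDerivAt (hF c)
      (d + 2*d * (-(1:ℝ)/2) * (2 * fF c 0) ^ (-(1:ℝ)/2 - 1)) 0 := by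
    have hpow := (hf.const_mul 2).rpow_const (p := -(1:ℝ)/2) (Or.inl h2fne)
    exact hf.add hpow
  have hhval : d + 2*d * (-(1:ℝ)/2) * (2 * fF c 0) ^ (-(1:ℝ)/2 - 1) = d/2 := by
    rw [two_fF_zero, ← Real.rpow_mul (by norm_num : (0:ℝ) ≤ 2),
      show (2:ℝ)/3 * (-(1)/2 - 1) = -(1:ℝ) by norm_num, Real.rpow_neg_one]
    ring
  rw [hhval] at hh
  have hhne : hF c 0 ≠ 0 := by rw [hF_zero]; positivity
  have hg := hh.sqrt hhne
  have hsq : Real.sqrt (hF c 0) = 2^((1:ℝ)/3) := by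
    rw [hF_zero, Real.sqrt_eq_rpow, ← Real.rpow_mul (by norm_num : (0:ℝ) ≤ 2)]
    norm_num
  have hval : d/2 / (2 * Real.sqrt (hF c 0)) = -κ/12 := by
    rw [hsq, hd2, div_div, div_eq_div_iff (by positivity) (by norm_num : (12:ℝ) ≠ 0)]
    ring
  rw [hval] at hg
  exact hg

lemma pF_zero (c : ℝ) : pF c 0 = Real.sqrt 3 := by
  rw [pF, two_fF_zero, ← Real.rpow_mul (by norm_num : (0:ℝ) ≤ 2),
    show (2:ℝ)/3 * (-(3)/2) = -(1:ℝ) by norm_num, Real.rpow_neg_one]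
  norm_num

lemma continuousAt_pF {c : ℝ} (hc : 0 < c) : ContinuousAt (pF c) 0 := by
  have hf : ContinuousAt (fun t => 2 * fF c t) 0 :=
    continuousAt_const.mul (hasDerivAt_fF hc).continuousAt
  have h2 : ContinuousAt (fun t => (2 * fF c t) ^ (-(3:ℝ)/2)) 0 :=
    hf.rpow_const (Or.inl (by rw [two_fF_zero]; positivity))
  have h3 : ContinuousAt (fun t => 4 * (2 * fF c t) ^ (-(3:ℝ)/2) + 1) 0 :=
    (continuousAt_const.mul h2).add continuousAt_const
  exact Real.continuous_sqrt.continuousAt.comp h3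

lemma arctan_sqrt_three : Real.arctan (Real.sqrt 3) = Real.pi/3 := by
  rw [← Real.tan_pi_div_three]
  exact Real.arctan_tan (by linarith [Real.pi_pos]) (by linarith [Real.pi_pos])

lemma abs_aux (r y : ℝ) (hr : 0 ≤ r) :
    ‖-(1/2:ℂ) * (r:ℂ) * (1 - Complex.I * (y:ℂ))‖ =
      1/2 * r * Real.sqrt (1 + y^2) := by
  rw [norm_mul, norm_mul]
  have h1 : ‖-(1/2:ℂ)‖ = 1/2 := by
    rw [norm_neg]
    norm_num
  have h2 : ‖((r:ℂ))‖ = r := by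
    simp [abs_of_nonneg hr]
  have h3 : ‖1 - Complex.I * (y:ℂ)‖ = Real.sqrt (1 + y^2) := by
    rw [Complex.norm_def, Complex.normSq_apply]
    simp
    ring_nf
  rw [h1, h2, h3]

lemma arg_aux (r y : ℝ) (hr : 0 < r) (hy : 0 ≤ y) :
    Complex.arg (-(1/2:ℂ) * (r:ℂ) * (1 - Complex.I * (y:ℂ))) =
      Real.pi - Real.arctan y := by
  set z : ℂ := -(1/2:ℂ) * (r:ℂ) * (1 - Complex.I * (y:ℂ)) with hz
  have hre : z.re = -(1/2) * r := by simp [hz]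
  have him : z.im = 1/2 * r * y := by simp [hz]
  have habs : ‖z‖ = 1/2 * r * Real.sqrt (1 + y^2) := abs_aux r y hr.le
  have hsq : 0 < Real.sqrt (1 + y^2) := Real.sqrt_pos.mpr (by positivity)
  rw [Complex.arg_of_re_neg_of_im_nonneg (by rw [hre]; nlinarith) (by rw [him]; positivity)]
  rw [Complex.neg_im, him, habs]
  rw [show -(1/2 * r * y) / (1/2 * r * Real.sqrt (1 + y^2)) = -(y / Real.sqrt (1+y^2)) by
    field_simp]
  rw [Real.arcsin_neg, ← Real.arctan_eq_arcsin]
  ring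

theorem stmt18 (κ : ℝ) (hκ : 0 < κ) (κn yn ynp : ℕ → ℝ) (lami : ℕ → ℂ)
    (hκn : ∀ n : ℕ, κn n = 16 / 27 * κ ^ 3 / (2 * (n : ℝ) + 1) ^ 2)
    (hyn : ∀ n : ℕ, yn n = (2 : ℝ) ^ (-(2 : ℝ) / 3) * (2 * (n : ℝ) + 1) ^ ((4 : ℝ) / 3) *
        (((1 + κn n) ^ ((1 : ℝ) / 2) + 1) ^ ((1 : ℝ) / 3)
          - ((1 + κn n) ^ ((1 : ℝ) / 2) - 1) ^ ((1 : ℝ) / 3)))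
    (hynp : ∀ n : ℕ,
      ynp n = Real.sqrt (4 * (2 * (n : ℝ) + 1) ^ 2 * (2 * yn n) ^ (-(3 : ℝ) / 2) + 1))
    (hlam : ∀ n : ℕ,
      lami n = -(1 / 2 : ℂ) * (Real.sqrt (2 * yn n) : ℂ) * (1 - Complex.I * (ynp n : ℂ))) :
    Tendsto (fun n : ℕ =>
        ‖lami n‖ - (2 : ℝ) ^ ((1 : ℝ) / 3) * (2 * (n : ℝ) + 1) ^ ((2 : ℝ) / 3))
      atTop (nhds (-κ / 12)) ∧
    Tendsto (fun n : ℕ => Complex.arg (lami n)) atTop (nhds (2 * Real.pi / 3)) := by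
  set c : ℝ := 16/27*κ^3 with hcdef
  have hc : 0 < c := by positivity
  have key : ∀ n : ℕ,
      (‖lami n‖ - (2:ℝ)^((1:ℝ)/3) * (2*(n:ℝ)+1)^((2:ℝ)/3)
        = (gF c ((2*(n:ℝ)+1)^(-(2:ℝ)/3)) - gF c 0) / ((2*(n:ℝ)+1)^(-(2:ℝ)/3) - 0))
      ∧ Complex.arg (lami n) = Real.pi - Real.arctan (pF c ((2*(n:ℝ)+1)^(-(2:ℝ)/3))) := by
    intro n
    set X : ℝ := 2*(n:ℝ)+1 with hXdef
    have hX0 : 0 < X := by positivity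
    set τ : ℝ := X ^ (-(2:ℝ)/3) with hτdef
    have hτ0 : 0 < τ := Real.rpow_pos_of_pos hX0 _
    have hτ3 : τ^(3:ℕ) = (X^(2:ℕ))⁻¹ := by
      rw [hτdef, ← Real.rpow_natCast (X ^ (-(2:ℝ)/3)) 3, ← Real.rpow_mul hX0.le,
        ← Real.rpow_natCast X 2, ← Real.rpow_neg hX0.le]
      norm_num
    have hτinv : X^((2:ℝ)/3) = τ⁻¹ := by
      rw [hτdef, ← Real.rpow_neg hX0.le]
      norm_num
    have hX43 : X^(-(2:ℝ)/3) * X^(2:ℕ) = X^((4:ℝ)/3) := by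
      rw [← Real.rpow_natCast X 2, ← Real.rpow_add hX0]; norm_num
    have hX2 : (X^(2:ℕ):ℝ) * X^(-(2:ℝ)) = 1 := by
      rw [← Real.rpow_natCast X 2, ← Real.rpow_add hX0]; norm_num
    have hX4312 : (X^((4:ℝ)/3))^(-(1:ℝ)/2) = X^(-(2:ℝ)/3) := by
      rw [← Real.rpow_mul hX0.le]; norm_num
    have hX4332 : (X^((4:ℝ)/3))^(-(3:ℝ)/2) = X^(-(2:ℝ)) := by
      rw [← Real.rpow_mul hX0.le]; norm_num
    have hsqX : Real.sqrt (X^((4:ℝ)/3)) = X^((2:ℝ)/3) := by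
      rw [Real.sqrt_eq_rpow, ← Real.rpow_mul hX0.le]; norm_num
    have hκτ : κn n = c * τ^(3:ℕ) := by
      rw [hκn n, ← hXdef, hτ3, div_eq_mul_inv]
    have hκpos : 0 < κn n := by
      rw [hκτ]; exact mul_pos hc (pow_pos hτ0 3)
    have hsv : sF c τ = (1 + κn n) ^ ((1:ℝ)/2) := by rw [sF, hκτ]
    set S : ℝ := sF c τ with hSdef
    have hS1 : 1 ≤ S := by
      rw [hsv]
      calc (1:ℝ) = 1 ^ ((1:ℝ)/2) := (Real.one_rpow _).symm
        _ ≤ (1 + κn n) ^ ((1:ℝ)/2) :=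
            Real.rpow_le_rpow (by norm_num) (by linarith) (by norm_num)
    have hSp : (0:ℝ) < S + 1 := by linarith
    have hcτ3 : (0:ℝ) < 1 + c * τ^3 := by
      have := mul_pos hc (pow_pos hτ0 3); linarith
    have hSsq : S^(2:ℕ) = 1 + c*τ^3 := by
      rw [hSdef, sF, ← Real.rpow_natCast ((1 + c*τ^3) ^ ((1:ℝ)/2)) 2,
        ← Real.rpow_mul hcτ3.le]
      norm_num
    have hSm : S - 1 = τ^3 * (c/(S+1)) := by
      field_simp
      linear_combination hSsq
    have hcube : (S - 1)^((1:ℝ)/3) = τ * (c/(S+1))^((1:ℝ)/3) := by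
      rw [hSm, Real.mul_rpow (by positivity) (le_of_lt (div_pos hc hSp)),
        ← Real.rpow_natCast τ 3, ← Real.rpow_mul hτ0.le]
      norm_num
    have hyn_eq : yn n = fF c τ * X^((4:ℝ)/3) := by
      rw [hyn n, ← hXdef, ← hsv, fF, ← hSdef, hcube]
      ring
    have hfpos : 0 < fF c τ := by
      rw [fF, ← hSdef, ← hcube]
      apply mul_pos (by positivity)
      have := Real.rpow_lt_rpow (by linarith : (0:ℝ) ≤ S - 1)
        (by linarith : S - 1 < S + 1) (by norm_num : (0:ℝ) < 1/3)
      linarith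
    have hynpos : 0 < yn n := by
      rw [hyn_eq]; exact mul_pos hfpos (Real.rpow_pos_of_pos hX0 _)
    have h2ynpos : 0 < 2 * yn n := by linarith
    have h2fpos : 0 < 2 * fF c τ := by linarith
    have h2yn : 2 * yn n = (2 * fF c τ) * X^((4:ℝ)/3) := by rw [hyn_eq]; ring
    have h2yn32 : (2*yn n)^(-(3:ℝ)/2) = (2*fF c τ)^(-(3:ℝ)/2) * X^(-(2:ℝ)) := by
      rw [h2yn, Real.mul_rpow h2fpos.le (Real.rpow_pos_of_pos hX0 _).le, hX4332]
    have hynp_eq : ynp n = pF c τ := by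
      rw [hynp n, ← hXdef, pF]
      congr 1
      rw [h2yn32]
      linear_combination (4 * (2*fF c τ)^(-(3:ℝ)/2)) * hX2
    have hynp_nonneg : 0 ≤ ynp n := by rw [hynp n]; exact Real.sqrt_nonneg _
    have hrpos : 0 < Real.sqrt (2 * yn n) := Real.sqrt_pos.mpr h2ynpos
    have habs1 : ‖lami n‖
        = 1/2 * Real.sqrt (2*yn n) * Real.sqrt (1 + ynp n^2) := by
      rw [hlam n]; exact abs_aux _ _ (Real.sqrt_nonneg _)
    have hynpsq : ynp n ^ 2 = 4 * X^(2:ℕ) * (2*yn n)^(-(3:ℝ)/2) + 1 := by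
      rw [hynp n, ← hXdef]
      refine Real.sq_sqrt ?_
      have w := Real.rpow_nonneg h2ynpos.le (-(3:ℝ)/2)
      have hx2 : (0:ℝ) ≤ X^(2:ℕ) := sq_nonneg X
      have := mul_nonneg (mul_nonneg (by norm_num : (0:ℝ) ≤ 4) hx2) w
      linarith
    have hm1 : (2*yn n) * (2*yn n)^(-(3:ℝ)/2) = (2*yn n)^(-(1:ℝ)/2) := by
      nth_rewrite 1 [← Real.rpow_one (2*yn n)]
      rw [← Real.rpow_add h2ynpos]; norm_num
    have hm2 : (2*yn n)^(-(1:ℝ)/2) = (2*fF c τ)^(-(1:ℝ)/2) * X^(-(2:ℝ)/3) := by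
      rw [h2yn, Real.mul_rpow h2fpos.le (Real.rpow_pos_of_pos hX0 _).le, hX4312]
    have hyy : (2*yn n) * (1 + ynp n^2) = 4 * (hF c τ * X^((4:ℝ)/3)) := by
      rw [hynpsq, hF]
      linear_combination 4*(X^(2:ℕ):ℝ)*hm1 + 4*(X^(2:ℕ):ℝ)*hm2
        + 4*((2*fF c τ)^(-(1:ℝ)/2))*hX43 + 2*h2yn
    have hhnn : 0 ≤ hF c τ := by
      rw [hF]
      have := Real.rpow_pos_of_pos h2fpos (-(1:ℝ)/2)
      linarith
    have hsqrt4 : Real.sqrt 4 = 2 := by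
      rw [show (4:ℝ) = 2^2 by norm_num, Real.sqrt_sq (by norm_num : (0:ℝ) ≤ 2)]
    have habs : ‖lami n‖ = gF c τ * X^((2:ℝ)/3) := by
      rw [habs1, mul_assoc, ← Real.sqrt_mul h2ynpos.le, hyy,
        Real.sqrt_mul (by norm_num : (0:ℝ) ≤ 4), hsqrt4,
        Real.sqrt_mul hhnn, hsqX, gF]
      ring
    have e2 : (gF c τ - gF c 0) / (τ - 0) = (gF c τ - gF c 0) * X^((2:ℝ)/3) := by
      rw [sub_zero, div_eq_mul_inv, hτinv]
    constructor
    · rw [habs, e2, gF_zero]; ring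
    · rw [hlam n, arg_aux _ _ hrpos hynp_nonneg, hynp_eq]
  -- limits
  have hXtend : Tendsto (fun n : ℕ => 2*(n:ℝ)+1) atTop atTop := by
    apply Filter.tendsto_atTop_add_const_right
    exact (tendsto_natCast_atTop_atTop (R := ℝ)).const_mul_atTop two_pos
  have hTtend : Tendsto (fun n : ℕ => (2*(n:ℝ)+1)^(-(2:ℝ)/3)) atTop (𝓝 0) := by
    have h := (tendsto_rpow_neg_atTop (by norm_num : (0:ℝ) < 2/3)).comp hXtend
    exact h.congr fun n => by norm_num [Function.comp]
  have hT0 : Tendsto (fun n : ℕ => (2*(n:ℝ)+1)^(-(2:ℝ)/3)) atTop (𝓝[≠] 0) := by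
    rw [tendsto_nhdsWithin_iff]
    refine ⟨hTtend, Filter.Eventually.of_forall fun n => ?_⟩
    simp only [Set.mem_compl_iff, Set.mem_singleton_iff]
    exact (Real.rpow_pos_of_pos (by positivity) _).ne'
  constructor
  · have hslope := hasDerivAt_iff_tendsto_slope.mp (hasDerivAt_gF hκ)
    have h1 := hslope.comp hT0
    refine h1.congr fun n => ?_
    simp only [Function.comp_apply]
    rw [slope_def_field]
    exact ((key n).1).symm
  · have hp : Tendsto (fun n : ℕ => pF c ((2*(n:ℝ)+1)^(-(2:ℝ)/3))) atTop
        (𝓝 (Real.sqrt 3)) := by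
      have h := (continuousAt_pF hc).tendsto.comp hTtend
      rw [pF_zero] at h
      exact h
    have harctan : Tendsto (fun n : ℕ => Real.arctan (pF c ((2*(n:ℝ)+1)^(-(2:ℝ)/3))))
        atTop (𝓝 (Real.pi/3)) := by
      have h := (Real.continuous_arctan.continuousAt (x := Real.sqrt 3)).tendsto.comp hp
      rw [_root_.arctan_sqrt_three] at h
      exact h
    have h2 := (tendsto_const_nhds : Tendsto (fun _ : ℕ => Real.pi) atTop (𝓝 Real.pi)).sub harctan
    rw [show Real.pi - Real.pi/3 = 2*Real.pi/3 by ring] at h2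
    exact h2.congr fun n => ((key n).2).symm
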